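/- Deterministic individual-trader ansatz verification: given C¹ functions f^a, f^{a,I}, f^b, f^{b,I}, f^c solving the ODE system (13)–(17) of the paper with terminal conditions f^a(T)=f^{a,I}(T)=f^b(T)=f^c(T)=0, f^{b,I}(T)=−a_I/η_I, and given solutions α' = −k^α α, (α^I)' = −k^I α^I, and the equilibrium aggregates ν̄, ν^B, Q̄, Q̄^B as above, define ν^I = f^a α + f^{a,I} α^I + f^b Q̄ + f^{b,I} Q^I + f^c Q̄^B with (Q^I)' = ν^I, Q^I(0)=0. Then −2η_I (ν^I)' = b ν^B + α^I + α − 2φ_I Q^I on [0,T] and 2η_I ν^I(T) = −2a_I Q^I(T). -/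

import Mathlib

/-- Deterministic verification of the individual informed trader's ansatz: if
`f^a, f^{a,I}, f^b, f^{b,I}, f^c` solve the ODE system (13)–(17) with their
terminal conditions, `α' = −k^α α`, `(α^I)' = −k^I α^I`, the equilibrium
aggregates satisfy `ν̄ = g^a α + g^b Q̄ + g^c Q̄^B`,
`ν^B = h^a α + h^b Q̄ + h^c Q̄^B`, `Q̄' = ν̄`, `(Q̄^B)' = ν^B − ν̄`, and
`ν^I = f^a α + f^{a,I} α^I + f^b Q̄ + f^{b,I} Q^I + f^c Q̄^B` with `(Q^I)' = ν^I`,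
`Q^I(0) = 0`, then `−2η_I (ν^I)' = b ν^B + α^I + α − 2φ_I Q^I` on `[0,T]` and
`2η_I ν^I(T) = −2a_I Q^I(T)`. -/
theorem stmt_19 (T b kα kI ηI ηB φI aI : ℝ) (hT : 0 < T)
    (hb : 0 < b) (hkα : 0 < kα) (hkI : 0 < kI) (hηI : 0 < ηI) (hηB : 0 < ηB)
    (hφI : 0 < φI) (haI : 0 < aI)
    (ga gb gc ha hb hc : ℝ → ℝ)
    (fa faI fb fbI fc : ℝ → ℝ)
    (hfa : ∀ t ∈ Set.Icc (0:ℝ) T, HasDerivWithinAt fa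
      (-(-kα * fa t + fb t * ga t + fbI t * fa t + fc t * (ha t - ga t)
          + (b * ha t + 1) / (2 * ηI))) (Set.Icc 0 T) t)
    (hfaI : ∀ t ∈ Set.Icc (0:ℝ) T, HasDerivWithinAt faI
      (-(-kI * faI t + fbI t * faI t + 1 / (2 * ηI))) (Set.Icc 0 T) t)
    (hfb : ∀ t ∈ Set.Icc (0:ℝ) T, HasDerivWithinAt fb
      (-(fb t * gb t + fbI t * fb t + fc t * (hb t - gb t) + b * hb t / (2 * ηI)))
      (Set.Icc 0 T) t)
    (hfbI : ∀ t ∈ Set.Icc (0:ℝ) T, HasDerivWithinAt fbI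
      (-((fbI t) ^ 2 - φI / ηI)) (Set.Icc 0 T) t)
    (hfc : ∀ t ∈ Set.Icc (0:ℝ) T, HasDerivWithinAt fc
      (-(fb t * gc t + fbI t * fc t + fc t * (hc t - gc t) + b * hc t / (2 * ηI)))
      (Set.Icc 0 T) t)
    (hfaT : fa T = 0) (hfaIT : faI T = 0) (hfbT : fb T = 0) (hfcT : fc T = 0)
    (hfbIT : fbI T = -aI / ηI)
    (α αI : ℝ → ℝ)
    (hα : ∀ t ∈ Set.Icc (0:ℝ) T, HasDerivWithinAt α (-kα * α t) (Set.Icc 0 T) t)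
    (hαI : ∀ t ∈ Set.Icc (0:ℝ) T, HasDerivWithinAt αI (-kI * αI t) (Set.Icc 0 T) t)
    (Qbar QB QI νbar νB νI : ℝ → ℝ)
    (hνbar : ∀ t, νbar t = ga t * α t + gb t * Qbar t + gc t * QB t)
    (hνB : ∀ t, νB t = ha t * α t + hb t * Qbar t + hc t * QB t)
    (hQbar : ∀ t ∈ Set.Icc (0:ℝ) T, HasDerivWithinAt Qbar (νbar t) (Set.Icc 0 T) t)
    (hQB : ∀ t ∈ Set.Icc (0:ℝ) T, HasDerivWithinAt QB (νB t - νbar t) (Set.Icc 0 T) t)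
    (hνI : ∀ t, νI t = fa t * α t + faI t * αI t + fb t * Qbar t
        + fbI t * QI t + fc t * QB t)
    (hQI0 : QI 0 = 0)
    (hQI : ∀ t ∈ Set.Icc (0:ℝ) T, HasDerivWithinAt QI (νI t) (Set.Icc 0 T) t) :
    (∀ t ∈ Set.Icc (0:ℝ) T, HasDerivWithinAt νI
        (-((b * νB t + αI t + α t - 2 * φI * QI t) / (2 * ηI))) (Set.Icc 0 T) t) ∧
    2 * ηI * νI T = -2 * aI * QI T := by
  constructor
  · intro t ht
    have h1 := (((((hfa t ht).mul (hα t ht)).add ((hfaI t ht).mul (hαI t ht))).add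
      ((hfb t ht).mul (hQbar t ht))).add ((hfbI t ht).mul (hQI t ht))).add
      ((hfc t ht).mul (hQB t ht))
    have hfun : νI = fun s => fa s * α s + faI s * αI s + fb s * Qbar s
        + fbI s * QI s + fc s * QB s := funext hνI
    rw [hfun]
    refine h1.congr_deriv ?_
    rw [hνI t, hνbar t, hνB t]
    field_simp
    ring
  · rw [hνI T, hfaT, hfaIT, hfbT, hfcT, hfbIT]
    field_simp
    ring
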